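/- Assume θ = 0. The free chain with parameters (λ₁, λ_tot, μ, 0) admits a stationary distribution if and only if λ₁ + λ_tot < μ; moreover, when λ₁ + λ_tot < μ, every stationary distribution π satisfies Σ_{x∈ℕ²} (x₁ + x₂)·π(x) < ∞. -/

import Mathlib

open Filter Topology

/-- `π` is a stationary distribution of the free chain with parameters
`(l1, lt, mu, th)` (arrival rates `l1`, `lt`, service rate `mu`, mobility rate `th`). -/
def IsStationaryFree (l1 lt mu th : ℝ) (π : ℕ × ℕ → ℝ) : Prop :=
  (∀ x, 0 ≤ π x) ∧ HasSum π 1 ∧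
    ∀ x1 x2 : ℕ,
      π (x1, x2) * (l1 + lt + (if (x1, x2) ≠ ((0 : ℕ), (0 : ℕ)) then mu else 0)
          + th * (x2 : ℝ))
        = l1 * (if 1 ≤ x1 then π (x1 - 1, x2) else 0)
          + lt * (if 1 ≤ x2 then π (x1, x2 - 1) else 0)
          + mu * ((x1 : ℝ) + 1) / ((x1 : ℝ) + 1 + (x2 : ℝ)) * π (x1 + 1, x2)
          + (mu * ((x2 : ℝ) + 1) / ((x1 : ℝ) + (x2 : ℝ) + 1) + th * ((x2 : ℝ) + 1))
              * π (x1, x2 + 1)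

open Finset
section auxx
set_option linter.unnecessarySeqFocus false

noncomputable def freePi (l1 lt mu : ℝ) : ℕ × ℕ → ℝ := fun x =>
  (1 - (l1+lt)/mu) * ((x.1+x.2).choose x.1) * (l1/mu)^x.1 * (lt/mu)^x.2

lemma natD1 (x1 x2 : ℕ) :
    (x1+1) * Nat.choose (x1+x2+1) (x1+1) = (x1+x2+1) * Nat.choose (x1+x2) x1 := by
  have h := Nat.add_one_mul_choose_eq (x1+x2) x1
  linarith

lemma natD2 (x1 x2 : ℕ) :
    (x2+1) * Nat.choose (x1+x2+1) x1 = (x1+x2+1) * Nat.choose (x1+x2) x1 := by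
  have h1 : Nat.choose (x1+x2+1) x1 = Nat.choose (x1+x2+1) (x2+1) := by
    rw [← Nat.choose_symm (by omega : x2+1 ≤ x1+x2+1)]; congr 1; omega
  have h2 : Nat.choose (x1+x2) x1 = Nat.choose (x1+x2) x2 := by
    rw [← Nat.choose_symm (by omega : x2 ≤ x1+x2)]; congr 1; omega
  have h := Nat.add_one_mul_choose_eq (x1+x2) x2
  rw [h1, h2, show x1+x2+1 = x2+x1+1 from by omega] at *
  linarith [h]

lemma freePi_D1 (l1 lt mu : ℝ) (hmu : 0 < mu) (x1 x2 : ℕ) :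
    mu * ((x1 : ℝ) + 1) / ((x1 : ℝ) + 1 + (x2 : ℝ)) * freePi l1 lt mu (x1 + 1, x2)
      = l1 * freePi l1 lt mu (x1, x2) := by
  have hne : (x1:ℝ) + 1 + (x2:ℝ) ≠ 0 := by positivity
  have hx1 : (x1:ℝ) + 1 ≠ 0 := by positivity
  have key : ((x1:ℝ)+1) * ((x1+x2+1).choose (x1+1) : ℝ)
      = ((x1:ℝ)+(x2:ℝ)+1) * (((x1+x2).choose x1 : ℕ) : ℝ) := by
    exact_mod_cast congrArg (Nat.cast (R := ℝ)) (natD1 x1 x2)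
  have e1 : (((x1+1+x2).choose (x1+1) : ℕ) : ℝ)
      = (((x1:ℝ)+1+x2) * ((x1+x2).choose x1)) / ((x1:ℝ)+1) := by
    rw [show x1+1+x2 = x1+x2+1 from by omega]
    field_simp
    linarith [key]
  simp only [freePi]
  rw [e1]
  field_simp
  ring_nf
  field_simp
  ring

lemma freePi_D2 (l1 lt mu : ℝ) (hmu : 0 < mu) (x1 x2 : ℕ) :
    mu * ((x2 : ℝ) + 1) / ((x1 : ℝ) + (x2 : ℝ) + 1) * freePi l1 lt mu (x1, x2 + 1)
      = lt * freePi l1 lt mu (x1, x2) := by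
  have hne : (x1:ℝ) + (x2:ℝ) + 1 ≠ 0 := by positivity
  have hx2 : (x2:ℝ) + 1 ≠ 0 := by positivity
  have key : ((x2:ℝ)+1) * ((x1+x2+1).choose x1 : ℝ)
      = ((x1:ℝ)+(x2:ℝ)+1) * (((x1+x2).choose x1 : ℕ) : ℝ) := by
    exact_mod_cast congrArg (Nat.cast (R := ℝ)) (natD2 x1 x2)
  have e1 : (((x1+(x2+1)).choose x1 : ℕ) : ℝ)
      = (((x1:ℝ)+x2+1) * ((x1+x2).choose x1)) / ((x2:ℝ)+1) := by
    rw [show x1+(x2+1) = x1+x2+1 from by omega]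
    field_simp
    linarith [key]
  simp only [freePi]
  rw [e1]
  field_simp
  ring_nf
  field_simp
  ring

lemma freePi_births (l1 lt mu : ℝ) (hmu : 0 < mu) (x1 x2 : ℕ) (h : (x1, x2) ≠ ((0:ℕ), (0:ℕ))) :
    l1 * (if 1 ≤ x1 then freePi l1 lt mu (x1 - 1, x2) else 0)
      + lt * (if 1 ≤ x2 then freePi l1 lt mu (x1, x2 - 1) else 0)
      = mu * freePi l1 lt mu (x1, x2) := by
  have hmu' : mu ≠ 0 := hmu.ne'
  rcases x1 with _ | k <;> rcases x2 with _ | m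
  · exact absurd rfl h
  · simp only [freePi, Nat.le_zero, if_pos (by omega : 1 ≤ m+1), if_neg (by omega : ¬ 1 ≤ 0), if_neg (by omega : ¬ (1:ℕ) = 0)]
    simp only [Nat.add_sub_cancel, Nat.zero_add, Nat.choose_zero_right]
    field_simp
    ring_nf
    field_simp
    ring
  · simp only [freePi, if_pos (by omega : 1 ≤ k+1), if_neg (by omega : ¬ 1 ≤ 0)]
    simp only [Nat.add_sub_cancel, Nat.add_zero, Nat.choose_self]
    field_simp
    ring_nf
    field_simp
    ring
  · simp only [freePi, if_pos (by omega : 1 ≤ k+1), if_pos (by omega : 1 ≤ m+1)]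
    have e1 : k + 1 - 1 = k := rfl
    have e2 : m + 1 - 1 = m := rfl
    rw [e1, e2]
    have pascal : ((k+1+(m+1)).choose (k+1) : ℝ)
        = ((k+(m+1)).choose k : ℝ) + ((k+1+m).choose (k+1) : ℝ) := by
      rw [show k+1+(m+1) = (k+(m+1))+1 from by omega,
        show k+1+m = k+(m+1) from by omega]
      exact_mod_cast congrArg (Nat.cast (R := ℝ)) (Nat.choose_succ_succ' (k+(m+1)) k)
    rw [pascal]
    field_simp
    ring_nf
    field_simp
    ring

lemma freePi_balance (l1 lt mu : ℝ) (hmu : 0 < mu) (x1 x2 : ℕ) :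
    freePi l1 lt mu (x1, x2) * (l1 + lt + (if (x1, x2) ≠ ((0 : ℕ), (0 : ℕ)) then mu else 0)
        + 0 * (x2 : ℝ))
      = l1 * (if 1 ≤ x1 then freePi l1 lt mu (x1 - 1, x2) else 0)
        + lt * (if 1 ≤ x2 then freePi l1 lt mu (x1, x2 - 1) else 0)
        + mu * ((x1 : ℝ) + 1) / ((x1 : ℝ) + 1 + (x2 : ℝ)) * freePi l1 lt mu (x1 + 1, x2)
        + (mu * ((x2 : ℝ) + 1) / ((x1 : ℝ) + (x2 : ℝ) + 1) + 0 * ((x2 : ℝ) + 1))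
            * freePi l1 lt mu (x1, x2 + 1) := by
  have hD1 := freePi_D1 l1 lt mu hmu x1 x2
  have hD2 := freePi_D2 l1 lt mu hmu x1 x2
  by_cases h : (x1, x2) = ((0:ℕ), (0:ℕ))
  · obtain ⟨h1, h2⟩ := Prod.mk.inj h
    subst h1; subst h2
    simp only [ne_eq, not_true_eq_false, if_false, if_neg (by omega : ¬ (1:ℕ) ≤ 0)]
    norm_num at hD1 hD2 ⊢
    linear_combination -hD1 - hD2
  · rw [if_pos h]
    linear_combination -hD1 - hD2 - freePi_births l1 lt mu hmu x1 x2 h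


noncomputable def Pd (π : ℕ × ℕ → ℝ) (n : ℕ) : ℝ := ∑ k ∈ Finset.range (n+1), π (k, n - k)

/-- the triangle `{(x1,x2) : x1+x2 < N}` as a finset -/
def TriN (N : ℕ) : Finset (ℕ × ℕ) :=
  ((Finset.range N).sigma (fun n => Finset.range (n+1))).image (fun s => (s.2, s.1 - s.2))

lemma sum_TriN (f : ℕ × ℕ → ℝ) (N : ℕ) :
    ∑ p ∈ TriN N, f p = ∑ n ∈ Finset.range N, ∑ k ∈ Finset.range (n+1), f (k, n - k) := by
  rw [TriN, Finset.sum_image]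
  · rw [Finset.sum_sigma]
  · intro s hs t ht hst
    simp only [Finset.mem_coe, Finset.mem_sigma, Finset.mem_range] at hs ht
    obtain ⟨h1, h2⟩ := Prod.mk.inj hst
    have hfst : s.1 = t.1 := by omega
    exact Sigma.ext hfst (heq_of_eq (by omega))

lemma mem_TriN {N : ℕ} {p : ℕ × ℕ} (h : p.1 + p.2 < N) : p ∈ TriN N := by
  rw [TriN, Finset.mem_image]
  refine ⟨⟨p.1 + p.2, p.1⟩, ?_, ?_⟩
  · simp only [Finset.mem_sigma, Finset.mem_range]
    omega
  · simp only
    congr 1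
    omega


lemma cut_step (l1 lt mu : ℝ) (π : ℕ × ℕ → ℝ)
    (hbal : ∀ x1 x2 : ℕ,
      π (x1, x2) * (l1 + lt + (if (x1, x2) ≠ ((0 : ℕ), (0 : ℕ)) then mu else 0)
          + 0 * (x2 : ℝ))
        = l1 * (if 1 ≤ x1 then π (x1 - 1, x2) else 0)
          + lt * (if 1 ≤ x2 then π (x1, x2 - 1) else 0)
          + mu * ((x1 : ℝ) + 1) / ((x1 : ℝ) + 1 + (x2 : ℝ)) * π (x1 + 1, x2)
          + (mu * ((x2 : ℝ) + 1) / ((x1 : ℝ) + (x2 : ℝ) + 1) + 0 * ((x2 : ℝ) + 1))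
              * π (x1, x2 + 1)) :
    ∀ n : ℕ, (l1 + lt) * Pd π n = mu * Pd π (n+1) := by
  intro n
  induction n with
  | zero =>
    have h := hbal 0 0
    simp only [ne_eq, not_true_eq_false, if_false, if_neg (by omega : ¬ (1:ℕ) ≤ 0)] at h
    norm_num at h
    have h0 : Pd π 0 = π (0, 0) := by simp [Pd]
    have h1 : Pd π 1 = π (0, 1) + π (1, 0) := by
      simp [Pd, Finset.sum_range_succ]
    rw [h0, h1]
    linarith
  | succ n ih =>
    have H : ∑ k ∈ Finset.range (n+2),
        π (k, n+1-k) * (l1 + lt + (if (k, n+1-k) ≠ ((0:ℕ), (0:ℕ)) then mu else 0)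
          + 0 * ((n+1-k : ℕ) : ℝ))
        = ∑ k ∈ Finset.range (n+2),
          (l1 * (if 1 ≤ k then π (k - 1, n+1-k) else 0)
          + lt * (if 1 ≤ n+1-k then π (k, n+1-k - 1) else 0)
          + mu * ((k : ℝ) + 1) / ((k : ℝ) + 1 + ((n+1-k : ℕ) : ℝ)) * π (k + 1, n+1-k)
          + (mu * (((n+1-k : ℕ) : ℝ) + 1) / ((k : ℝ) + ((n+1-k : ℕ) : ℝ) + 1)
              + 0 * (((n+1-k : ℕ) : ℝ) + 1)) * π (k, n+1-k + 1)) :=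
      Finset.sum_congr rfl (fun k _ => hbal k (n+1-k))
    -- LHS
    have hL : ∑ k ∈ Finset.range (n+2),
        π (k, n+1-k) * (l1 + lt + (if (k, n+1-k) ≠ ((0:ℕ), (0:ℕ)) then mu else 0)
          + 0 * ((n+1-k : ℕ) : ℝ))
        = (l1 + lt + mu) * Pd π (n+1) := by
      rw [Pd, Finset.mul_sum]
      apply Finset.sum_congr rfl
      intro k hk
      rw [if_pos]
      · ring
      · intro hc
        obtain ⟨h1, h2⟩ := Prod.mk.inj hc
        omega
    -- RHS split
    rw [hL] at H
    have hsplit : ∑ k ∈ Finset.range (n+2),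
          (l1 * (if 1 ≤ k then π (k - 1, n+1-k) else 0)
          + lt * (if 1 ≤ n+1-k then π (k, n+1-k - 1) else 0)
          + mu * ((k : ℝ) + 1) / ((k : ℝ) + 1 + ((n+1-k : ℕ) : ℝ)) * π (k + 1, n+1-k)
          + (mu * (((n+1-k : ℕ) : ℝ) + 1) / ((k : ℝ) + ((n+1-k : ℕ) : ℝ) + 1)
              + 0 * (((n+1-k : ℕ) : ℝ) + 1)) * π (k, n+1-k + 1))
        = (∑ k ∈ Finset.range (n+2), l1 * (if 1 ≤ k then π (k - 1, n+1-k) else 0))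
          + (∑ k ∈ Finset.range (n+2), lt * (if 1 ≤ n+1-k then π (k, n+1-k - 1) else 0))
          + (∑ k ∈ Finset.range (n+2),
              mu * ((k : ℝ) + 1) / ((k : ℝ) + 1 + ((n+1-k : ℕ) : ℝ)) * π (k + 1, n+1-k))
          + (∑ k ∈ Finset.range (n+2),
              (mu * (((n+1-k : ℕ) : ℝ) + 1) / ((k : ℝ) + ((n+1-k : ℕ) : ℝ) + 1)
              + 0 * (((n+1-k : ℕ) : ℝ) + 1)) * π (k, n+1-k + 1)) := by
      simp [Finset.sum_add_distrib]
    rw [hsplit] at H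
    -- S1
    have hS1 : (∑ k ∈ Finset.range (n+2), l1 * (if 1 ≤ k then π (k - 1, n+1-k) else 0))
        = l1 * Pd π n := by
      rw [Finset.sum_range_succ']
      simp only [if_neg (by omega : ¬ (1:ℕ) ≤ 0), mul_zero, add_zero]
      rw [Pd, Finset.mul_sum]
      apply Finset.sum_congr rfl
      intro k hk
      rw [if_pos (by omega : 1 ≤ k+1)]
      have harg : ((k+1-1 : ℕ), (n+1-(k+1) : ℕ)) = ((k : ℕ), (n-k : ℕ)) := by
        congr 1 <;> omega
      rw [harg]
    -- S2
    have hS2 : (∑ k ∈ Finset.range (n+2), lt * (if 1 ≤ n+1-k then π (k, n+1-k - 1) else 0))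
        = lt * Pd π n := by
      rw [Finset.sum_range_succ]
      rw [if_neg (by omega : ¬ 1 ≤ n+1-(n+1)), mul_zero, add_zero]
      rw [Pd, Finset.mul_sum]
      apply Finset.sum_congr rfl
      intro k hk
      have hk' : k < n+1 := Finset.mem_range.mp hk
      rw [if_pos (by omega : 1 ≤ n+1-k)]
      have harg : ((k : ℕ), (n+1-k-1 : ℕ)) = ((k : ℕ), (n-k : ℕ)) := by
        congr 1 <;> omega
      rw [harg]
    -- S3
    have hS3 : (∑ k ∈ Finset.range (n+2),
          mu * ((k : ℝ) + 1) / ((k : ℝ) + 1 + ((n+1-k : ℕ) : ℝ)) * π (k + 1, n+1-k))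
        = ∑ j ∈ Finset.range (n+3), mu * (j : ℝ) / ((n : ℝ) + 2) * π (j, n+2-j) := by
      have step1 : ∀ k ∈ Finset.range (n+2),
          mu * ((k : ℝ) + 1) / ((k : ℝ) + 1 + ((n+1-k : ℕ) : ℝ)) * π (k + 1, n+1-k)
            = mu * (((k+1 : ℕ)) : ℝ) / ((n : ℝ) + 2) * π (k+1, n+2-(k+1)) := by
        intro k hk
        have hk' : k < n+2 := Finset.mem_range.mp hk
        have hcast : ((n+1-k : ℕ) : ℝ) = (n : ℝ) + 1 - (k : ℝ) := by
          rw [Nat.cast_sub (by omega : k ≤ n+1)]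
          push_cast; ring
        have harg : n+1-k = n+2-(k+1) := by omega
        rw [hcast, harg]
        push_cast
        ring
      rw [Finset.sum_congr rfl step1]
      rw [Finset.sum_range_succ' (fun j => mu * (j : ℝ) / ((n : ℝ) + 2) * π (j, n+2-j)) (n+2)]
      norm_num
    -- S4
    have hS4 : (∑ k ∈ Finset.range (n+2),
          (mu * (((n+1-k : ℕ) : ℝ) + 1) / ((k : ℝ) + ((n+1-k : ℕ) : ℝ) + 1)
              + 0 * (((n+1-k : ℕ) : ℝ) + 1)) * π (k, n+1-k + 1))
        = ∑ j ∈ Finset.range (n+3), mu * ((n : ℝ) + 2 - (j : ℝ)) / ((n : ℝ) + 2) * π (j, n+2-j) := by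
      have step1 : ∀ k ∈ Finset.range (n+2),
          (mu * (((n+1-k : ℕ) : ℝ) + 1) / ((k : ℝ) + ((n+1-k : ℕ) : ℝ) + 1)
              + 0 * (((n+1-k : ℕ) : ℝ) + 1)) * π (k, n+1-k + 1)
            = mu * ((n : ℝ) + 2 - (k : ℝ)) / ((n : ℝ) + 2) * π (k, n+2-k) := by
        intro k hk
        have hk' : k < n+2 := Finset.mem_range.mp hk
        have hcast : ((n+1-k : ℕ) : ℝ) = (n : ℝ) + 1 - (k : ℝ) := by
          rw [Nat.cast_sub (by omega : k ≤ n+1)]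
          push_cast; ring
        have harg : n+1-k+1 = n+2-k := by omega
        rw [hcast, harg]
        ring
      rw [Finset.sum_congr rfl step1]
      rw [Finset.sum_range_succ (fun j => mu * ((n : ℝ) + 2 - (j : ℝ)) / ((n : ℝ) + 2) * π (j, n+2-j)) (n+2)]
      push_cast
      norm_num
    rw [hS1, hS2, hS3, hS4] at H
    -- combine S3+S4
    have hcomb : (∑ j ∈ Finset.range (n+3), mu * (j : ℝ) / ((n : ℝ) + 2) * π (j, n+2-j))
        + (∑ j ∈ Finset.range (n+3), mu * ((n : ℝ) + 2 - (j : ℝ)) / ((n : ℝ) + 2) * π (j, n+2-j))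
        = mu * Pd π (n+2) := by
      rw [← Finset.sum_add_distrib, Pd, Finset.mul_sum]
      apply Finset.sum_congr rfl
      intro j hj
      have hne : (n : ℝ) + 2 ≠ 0 := by positivity
      field_simp
      ring
    show (l1+lt) * Pd π (n+1) = mu * Pd π (n+2)
    linarith [ih, hcomb, H]


lemma freePi_antidiag_sum (l1 lt mu : ℝ) (n : ℕ) :
    ∑ p ∈ Finset.HasAntidiagonal.antidiagonal n, freePi l1 lt mu p
      = (1 - (l1+lt)/mu) * (l1/mu + lt/mu)^n := by
  rw [Finset.Nat.sum_antidiagonal_eq_sum_range_succ_mk, add_pow, Finset.mul_sum]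
  apply Finset.sum_congr rfl
  intro k hk
  have hk' : k + (n - k) = n := by
    have := Finset.mem_range.mp hk; omega
  simp only [freePi, hk']
  ring

lemma freePi_nonneg (l1 lt mu : ℝ) (hl1 : 0 < l1) (hlt : 0 < lt) (hmu : 0 < mu)
    (hρ : l1 + lt < mu) (p : ℕ × ℕ) : 0 ≤ freePi l1 lt mu p := by
  have h1 : 0 ≤ 1 - (l1+lt)/mu := by
    have := (div_lt_one hmu).mpr hρ; linarith
  simp only [freePi]
  positivity

lemma freePi_hasSum (l1 lt mu : ℝ) (hl1 : 0 < l1) (hlt : 0 < lt) (hmu : 0 < mu)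
    (hρ : l1 + lt < mu) : HasSum (freePi l1 lt mu) 1 := by
  have hr0 : 0 ≤ (l1+lt)/mu := by positivity
  have hr1 : (l1+lt)/mu < 1 := (div_lt_one hmu).mpr hρ
  have hab : l1/mu + lt/mu = (l1+lt)/mu := by ring
  have hfiber : ∀ n : ℕ, HasSum (fun p : (Finset.HasAntidiagonal.antidiagonal n : Finset (ℕ × ℕ)) =>
      freePi l1 lt mu p) ((1 - (l1+lt)/mu) * ((l1+lt)/mu) ^ n) := by
    intro n
    have h := (Finset.HasAntidiagonal.antidiagonal n).hasSum (freePi l1 lt mu)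
    rwa [freePi_antidiag_sum l1 lt mu n, hab] at h
  have hg : HasSum (fun n : ℕ => (1 - (l1+lt)/mu) * ((l1+lt)/mu) ^ n) 1 := by
    have h := (hasSum_geometric_of_lt_one hr0 hr1).mul_left (1 - (l1+lt)/mu)
    have : (1 - (l1+lt)/mu) * (1 - (l1+lt)/mu)⁻¹ = 1 := by
      apply mul_inv_cancel₀; intro h0; linarith [hr1]
    rwa [this] at h
  have hnn : ∀ p : ℕ × ℕ, 0 ≤ freePi l1 lt mu p := freePi_nonneg l1 lt mu hl1 hlt hmu hρ
  set e := Finset.HasAntidiagonal.sigmaAntidiagonalEquivProd (A := ℕ) with he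
  have hFsum : Summable (freePi l1 lt mu ∘ e) := by
    refine (summable_sigma_of_nonneg (f := freePi l1 lt mu ∘ e) (fun x => hnn _)).mpr
      ⟨fun n => (hfiber n).summable, ?_⟩
    apply Summable.congr hg.summable
    intro n
    exact ((hfiber n).tsum_eq).symm
  have hF : HasSum (freePi l1 lt mu ∘ e) 1 :=
    HasSum.sigma_of_hasSum hg (fun n => hfiber n) hFsum
  exact e.hasSum_iff.mp hF


end auxx

/-- Lemma 1.1 (θ = 0 case): the free chain admits a stationary distribution iff
λ₁ + λ_tot < μ, in which case every stationary distribution has finite mean. -/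
theorem free_chain_stability_zero_theta
    (l1 lt mu : ℝ) (hl1 : 0 < l1) (hlt : 0 < lt) (hmu : 0 < mu) :
    ((∃ π, IsStationaryFree l1 lt mu 0 π) ↔ l1 + lt < mu) ∧
    (l1 + lt < mu →
      ∀ π, IsStationaryFree l1 lt mu 0 π →
        Summable (fun x : ℕ × ℕ => ((x.1 : ℝ) + (x.2 : ℝ)) * π x)) := by
  have hmu' : mu ≠ 0 := hmu.ne'
  -- common facts for any stationary distribution
  have key : ∀ π : ℕ × ℕ → ℝ, IsStationaryFree l1 lt mu 0 π →
      (∀ n : ℕ, Pd π n = ((l1+lt)/mu)^n * Pd π 0) ∧ (∀ n, 0 ≤ Pd π n) ∧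
        (∀ N : ℕ, ∑ n ∈ Finset.range N, Pd π n ≤ 1) ∧ Pd π 0 ≤ 1 := by
    rintro π ⟨hnn, hsum, hbal⟩
    have hstep := cut_step l1 lt mu π hbal
    have hPdnn : ∀ n, 0 ≤ Pd π n := fun n => Finset.sum_nonneg (fun k _ => hnn _)
    have hgeom : ∀ n : ℕ, Pd π n = ((l1+lt)/mu)^n * Pd π 0 := by
      intro n
      induction n with
      | zero => simp
      | succ n ih =>
        have h := hstep n
        have : Pd π (n+1) = ((l1+lt)/mu) * Pd π n := by
          field_simp
          linarith
        rw [this, ih, pow_succ]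
        ring
    refine ⟨hgeom, hPdnn, ?_, ?_⟩
    · intro N
      have h1 : ∑ n ∈ Finset.range N, Pd π n = ∑ p ∈ TriN N, π p := by
        rw [sum_TriN]
        rfl
      rw [h1]
      exact sum_le_hasSum (TriN N) (fun i _ => hnn i) hsum
    · have h0 : Pd π 0 = π (0, 0) := by simp [Pd]
      rw [h0]
      exact le_hasSum hsum (0, 0) (fun j _ => hnn j)
  constructor
  · constructor
    · rintro ⟨π, hπ⟩
      obtain ⟨hgeom, hPdnn, hbound, -⟩ := key π hπ
      obtain ⟨hnn, hsum, hbal⟩ := hπ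
      by_contra hge
      push_neg at hge
      have hρ1 : 1 ≤ (l1+lt)/mu := (one_le_div hmu).mpr hge
      have hmono : ∀ n : ℕ, Pd π 0 ≤ Pd π n := by
        intro n
        rw [hgeom n]
        nlinarith [hPdnn 0, one_le_pow₀ (n := n) hρ1]
      have hNP : ∀ N : ℕ, (N : ℝ) * Pd π 0 ≤ 1 := by
        intro N
        calc (N : ℝ) * Pd π 0 = ∑ _n ∈ Finset.range N, Pd π 0 := by
              rw [Finset.sum_const, Finset.card_range, nsmul_eq_mul]
          _ ≤ ∑ n ∈ Finset.range N, Pd π n := Finset.sum_le_sum (fun i _ => hmono i)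
          _ ≤ 1 := hbound N
      have hP0 : Pd π 0 = 0 := by
        by_contra h0
        have hpos : 0 < Pd π 0 := lt_of_le_of_ne (hPdnn 0) (Ne.symm h0)
        obtain ⟨N, hN⟩ := exists_nat_gt (1 / Pd π 0)
        have h2 := hNP N
        rw [div_lt_iff₀ hpos] at hN
        linarith
      have hzero : ∀ p : ℕ × ℕ, π p = 0 := by
        intro p
        have hPn : Pd π (p.1 + p.2) = 0 := by rw [hgeom, hP0, mul_zero]
        have hle : π p ≤ Pd π (p.1 + p.2) := by
          have hmem : p.1 ∈ Finset.range (p.1 + p.2 + 1) := Finset.mem_range.mpr (by omega)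
          have := Finset.single_le_sum (f := fun k => π (k, p.1 + p.2 - k))
            (fun i _ => hnn _) hmem
          rw [Pd]
          have harg : ((p.1 : ℕ), (p.1 + p.2 - p.1 : ℕ)) = p := by
            have : p.1 + p.2 - p.1 = p.2 := by omega
            rw [this]
          rwa [harg] at this
        linarith [hnn p]
      have hcontr : (1 : ℝ) = 0 := by
        have h0 : HasSum π 0 := by
          have : π = fun _ => (0:ℝ) := funext hzero
          rw [this]
          exact hasSum_zero
        exact hsum.unique h0
      norm_num at hcontr
    · intro hρ
      exact ⟨freePi l1 lt mu, freePi_nonneg l1 lt mu hl1 hlt hmu hρ,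
        freePi_hasSum l1 lt mu hl1 hlt hmu hρ,
        fun x1 x2 => freePi_balance l1 lt mu hmu x1 x2⟩
  · rintro hρ π hπ
    obtain ⟨hgeom, hPdnn, -, hP01⟩ := key π hπ
    obtain ⟨hnn, hsum, hbal⟩ := hπ
    set r := (l1+lt)/mu with hr
    have hr0 : 0 ≤ r := by positivity
    have hr1 : r < 1 := (div_lt_one hmu).mpr hρ
    have hgs : Summable (fun n : ℕ => (n : ℝ) * r ^ n) :=
      (hasSum_coe_mul_geometric_of_norm_lt_one (by rwa [Real.norm_eq_abs, abs_of_nonneg hr0])).summable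
    have hfnn : ∀ x : ℕ × ℕ, 0 ≤ ((x.1 : ℝ) + (x.2 : ℝ)) * π x :=
      fun x => mul_nonneg (by positivity) (hnn x)
    apply summable_of_sum_le hfnn
    intro u
    set N := (u.sup (fun p => p.1 + p.2)) + 1 with hN
    have hsub : u ⊆ TriN N := by
      intro p hp
      apply mem_TriN
      have := Finset.le_sup (f := fun p : ℕ × ℕ => p.1 + p.2) hp
      omega
    calc ∑ x ∈ u, ((x.1 : ℝ) + (x.2 : ℝ)) * π x
        ≤ ∑ x ∈ TriN N, ((x.1 : ℝ) + (x.2 : ℝ)) * π x :=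
          Finset.sum_le_sum_of_subset_of_nonneg hsub (fun i _ _ => hfnn i)
      _ = ∑ n ∈ Finset.range N, (n : ℝ) * Pd π n := by
          rw [sum_TriN]
          apply Finset.sum_congr rfl
          intro n _
          rw [Pd, Finset.mul_sum]
          apply Finset.sum_congr rfl
          intro k hk
          have hk' : k < n + 1 := Finset.mem_range.mp hk
          have : ((n - k : ℕ) : ℝ) = (n : ℝ) - (k : ℝ) := by
            rw [Nat.cast_sub (by omega)]
          rw [this]
          ring
      _ ≤ ∑ n ∈ Finset.range N, (n : ℝ) * r ^ n := by
          apply Finset.sum_le_sum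
          intro n _
          rw [hgeom n]
          have h1 : 0 ≤ (n : ℝ) := by positivity
          have h2 : 0 ≤ r ^ n := by positivity
          nlinarith [hPdnn 0, hP01, mul_nonneg h1 h2]
      _ ≤ ∑' n : ℕ, (n : ℝ) * r ^ n :=
          Summable.sum_le_tsum (Finset.range N) (fun n _ => by positivity) hgs
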